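/- arXiv:0807.4123 — 5 statements merged into one kernel-verified Lean document; each statement's English description precedes it below -/
import Mathlib

section
/- Let V be a commutative unital quantale. Let ψ : (W,d) ⇸ (U,u), φ : (W,d) ⇸ (Y,b) be V-distributors and let α : (Y,b) ⇸ (Z,c) be a right adjoint V-distributor. Then α ∘ (φ ⟜ ψ) = (α ∘ φ) ⟜ ψ as distributors (U,u) ⇸ (Z,c). -/
universe u

/-- A commutative unital quantale: a complete lattice with a commutative monoid
structure whose multiplication distributes over arbitrary suprema. -/
class CommQuantale (V : Type u) extends CompleteLattice V, CommMonoid V where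
  mul_sSup : ∀ (x : V) (s : Set V), x * sSup s = ⨆ v ∈ s, x * v

variable {V : Type u} [CommQuantale V]

/-- The internal hom of the quantale: `qhom u v = sSup {w | u * w ≤ v}`. -/
def qhom (u v : V) : V := sSup {w | u * w ≤ v}

theorem mul_iSup' {ι : Sort*} (u : V) (v : ι → V) : u * (⨆ i, v i) = ⨆ i, u * v i := by
  rw [iSup, CommQuantale.mul_sSup, iSup_range]

theorem mul_mono_right' (u : V) {w w' : V} (h : w ≤ w') : u * w ≤ u * w' := by
  have hs : sSup ({w, w'} : Set V) = w' := by
    apply le_antisymm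
    · exact sSup_le (by rintro x (rfl | rfl); exacts [h, le_rfl])
    · exact le_sSup (by simp)
  have hm := CommQuantale.mul_sSup u ({w, w'} : Set V)
  rw [hs] at hm
  rw [hm]
  exact le_iSup₂ (f := fun v (_ : v ∈ ({w, w'} : Set V)) => u * v) w (by simp)

theorem mul_mono_left' {w w' : V} (h : w ≤ w') (u : V) : w * u ≤ w' * u := by
  rw [mul_comm w u, mul_comm w' u]; exact mul_mono_right' u h

theorem le_qhom_iff {u v w : V} : w ≤ qhom u v ↔ u * w ≤ v := by
  constructor
  · intro h
    have h2 : u * qhom u v ≤ v := by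
      rw [qhom, CommQuantale.mul_sSup]
      exact iSup₂_le fun w hw => hw
    exact le_trans (mul_mono_right' u h) h2
  · intro h; exact le_sSup h

theorem bot_mul' (u : V) : (⊥ : V) * u = ⊥ := by
  rw [mul_comm]
  have hm := CommQuantale.mul_sSup u (∅ : Set V)
  simpa using hm

/-- A `V`-category structure on `X`. -/
structure VCatStr (V : Type u) [CommQuantale V] (X : Type u) where
  hom : X → X → V
  refl : ∀ x, (1 : V) ≤ hom x x
  comp : ∀ x y z, hom x y * hom y z ≤ hom x z

/-- `V`-functoriality. -/
def IsVFunctor {X Y : Type u} (a : VCatStr V X) (b : VCatStr V Y) (f : X → Y) : Prop :=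
  ∀ x x', a.hom x x' ≤ b.hom (f x) (f x')

/-- `φ` is a `V`-distributor `(X,a) ⇸ (Y,b)`. -/
def IsDist {X Y : Type u} (a : VCatStr V X) (b : VCatStr V Y) (φ : X → Y → V) : Prop :=
  (∀ x' x y, a.hom x' x * φ x y ≤ φ x' y) ∧ (∀ x y y', φ x y * b.hom y y' ≤ φ x y')

/-- Composite `ψ ∘ φ` of distributors (`φ` first). -/
def dComp {X Y Z : Type u} (ψ : Y → Z → V) (φ : X → Y → V) : X → Z → V :=
  fun x z => ⨆ y, φ x y * ψ y z

/-- The extension `γ ⟜ α`. -/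
def dExt {X Y Z : Type u} (γ : X → Z → V) (α : X → Y → V) : Y → Z → V :=
  fun y z => ⨅ x, qhom (α x y) (γ x z)

/-- `f_*`. -/
def fStar {X Y : Type u} (b : VCatStr V Y) (f : X → Y) : X → Y → V :=
  fun x y => b.hom (f x) y

/-- `f^*`. -/
def fCostar {X Y : Type u} (b : VCatStr V Y) (f : X → Y) : Y → X → V :=
  fun y x => b.hom y (f x)

/-- `ψ ⊣ φ` is an adjunction of distributors, `ψ : (A,α) ⇸ (B,β)`, `φ : (B,β) ⇸ (A,α)`. -/
def DistAdj {A B : Type u} (α : VCatStr V A) (β : VCatStr V B)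
    (ψ : A → B → V) (φ : B → A → V) : Prop :=
  (∀ x x', α.hom x x' ≤ ⨆ y, ψ x y * φ y x') ∧
  (∀ y y', (⨆ x, φ y x * ψ x y') ≤ β.hom y y')

/-- `φ : (B,β) ⇸ (A,α)` is a right adjoint distributor. -/
def IsRightAdjDist {A B : Type u} (β : VCatStr V B) (α : VCatStr V A) (φ : B → A → V) : Prop :=
  ∃ ψ : A → B → V, IsDist α β ψ ∧ DistAdj α β ψ φ

/-- The pointwise order on `V`-functors. -/
def VLe {X Y : Type u} (b : VCatStr V Y) (f g : X → Y) : Prop :=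
  ∀ x, (1 : V) ≤ b.hom (f x) (g x)

/-- Equivalence of `V`-functors. -/
def VEquiv {X Y : Type u} (b : VCatStr V Y) (f g : X → Y) : Prop :=
  VLe b f g ∧ VLe b g f

def FullyFaithful {X Y : Type u} (a : VCatStr V X) (b : VCatStr V Y) (f : X → Y) : Prop :=
  ∀ x x', b.hom (f x) (f x') = a.hom x x'

def DenseF {X Y : Type u} (b : VCatStr V Y) (f : X → Y) : Prop :=
  ∀ y y', (⨆ x, b.hom y (f x) * b.hom (f x) y') = b.hom y y'

/-- `f` is a left adjoint `V`-functor. -/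
def LeftAdjointF {X Y : Type u} (a : VCatStr V X) (b : VCatStr V Y) (f : X → Y) : Prop :=
  ∃ g : Y → X, IsVFunctor b a g ∧ (∀ x, (1 : V) ≤ a.hom x (g (f x))) ∧
    (∀ y, (1 : V) ≤ b.hom (f (g y)) y)

/-- The one-point `V`-category `G`. -/
def unitCat (V : Type u) [CommQuantale V] : VCatStr V PUnit where
  hom _ _ := 1
  refl _ := le_refl 1
  comp _ _ _ := (one_mul 1).le

/-- Presheaves on `(X,a)`: distributors `(X,a) ⇸ G`. -/
def IsPresheaf {X : Type u} (a : VCatStr V X) (ψ : X → V) : Prop :=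
  ∀ x' x, a.hom x' x * ψ x ≤ ψ x'

/-- A class of `V`-distributors: for each pair of `V`-categories a predicate on maps. -/
def DistClass (V : Type u) [CommQuantale V] : Type (u + 1) :=
  ∀ ⦃X Y : Type u⦄, VCatStr V X → VCatStr V Y → (X → Y → V) → Prop

/-- The presheaf `ψ`, seen as distributor into `G`, lies in `Φ`. -/
def InPhi (Φ : DistClass V) {X : Type u} (a : VCatStr V X) (ψ : X → V) : Prop :=
  Φ a (unitCat V) (fun x _ => ψ x)

/-- Axioms (Ax1)–(Ax3) on a class of distributors. -/
structure DistAx (Φ : DistClass V) : Prop where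
  ax1 : ∀ {X Y : Type u} (a : VCatStr V X) (b : VCatStr V Y) (f : X → Y),
      IsVFunctor a b f → Φ b a (fCostar b f)
  ax2_left : ∀ {W X Y : Type u} (d : VCatStr V W) (a : VCatStr V X) (b : VCatStr V Y)
      (φ : W → Y → V) (f : X → Y), IsDist d b φ → IsVFunctor a b f → Φ d b φ →
      Φ d a (dComp (fCostar b f) φ)
  ax2_right : ∀ {X Y Z : Type u} (a : VCatStr V X) (b : VCatStr V Y) (c : VCatStr V Z)
      (φ : X → Z → V) (f : X → Y), IsDist a c φ → IsVFunctor a b f → Φ a c φ →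
      Φ b c (dComp φ (fCostar b f))
  ax2_star : ∀ {W X Z : Type u} (d : VCatStr V W) (a : VCatStr V X) (c : VCatStr V Z)
      (φ : X → Z → V) (f : W → X), IsDist a c φ → IsVFunctor d a f → Φ a c φ →
      Φ d a (fStar a f) → Φ d c (dComp φ (fStar a f))
  ax3 : ∀ {X Y : Type u} (a : VCatStr V X) (b : VCatStr V Y) (φ : X → Y → V),
      IsDist a b φ → (∀ y, Φ a (unitCat V) (fun x _ => φ x y)) → Φ a b φ

/-- Axiom (Ax4): `f_* ∈ Φ` for every surjective `V`-functor `f`. -/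
def Ax4 (Φ : DistClass V) : Prop :=
  ∀ {X Y : Type u} (a : VCatStr V X) (b : VCatStr V Y) (f : X → Y),
    IsVFunctor a b f → Function.Surjective f → Φ a b (fStar b f)

/-- `f` is `Φ`-dense. -/
def PhiDense (Φ : DistClass V) {X Y : Type u} (a : VCatStr V X) (b : VCatStr V Y)
    (f : X → Y) : Prop :=
  Φ a b (fStar b f)

/-- The `V`-category structure on `X → V`. -/
def funCat (V : Type u) [CommQuantale V] (X : Type u) : VCatStr V (X → V) where
  hom ψ ψ' := ⨅ x, qhom (ψ x) (ψ' x)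
  refl ψ := le_iInf fun x => le_qhom_iff.mpr (mul_one _).le
  comp ψ χ ω := le_iInf fun x => le_qhom_iff.mpr <| by
    calc ψ x * ((⨅ x', qhom (ψ x') (χ x')) * (⨅ x', qhom (χ x') (ω x')))
        = (ψ x * (⨅ x', qhom (ψ x') (χ x'))) * (⨅ x', qhom (χ x') (ω x')) :=
          (mul_assoc _ _ _).symm
      _ ≤ χ x * (⨅ x', qhom (χ x') (ω x')) :=
          mul_mono_left' (le_qhom_iff.mp (iInf_le (fun x' => qhom (ψ x') (χ x')) x)) _
      _ ≤ ω x := le_qhom_iff.mp (iInf_le (fun x' => qhom (χ x') (ω x')) x)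

/-- Full sub-`V`-category on a predicate. -/
def subCat {X : Type u} (a : VCatStr V X) (P : X → Prop) : VCatStr V {x : X // P x} where
  hom x y := a.hom x.1 y.1
  refl x := a.refl x.1
  comp x y z := a.comp x.1 y.1 z.1

/-- Carrier of the presheaf `V`-category `PX`. -/
def PCarrier {X : Type u} (a : VCatStr V X) : Type u := {ψ : X → V // IsPresheaf a ψ}

/-- The presheaf `V`-category `PX`. -/
def pCat {X : Type u} (a : VCatStr V X) : VCatStr V (PCarrier a) :=
  subCat (funCat V X) (IsPresheaf a)

/-- Carrier of `ΦX`: presheaves lying in `Φ`. -/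
def PhiCarrier (Φ : DistClass V) {X : Type u} (a : VCatStr V X) : Type u :=
  {ψ : X → V // IsPresheaf a ψ ∧ InPhi Φ a ψ}

/-- The `V`-category `ΦX`. -/
def phiCat (Φ : DistClass V) {X : Type u} (a : VCatStr V X) : VCatStr V (PhiCarrier Φ a) :=
  subCat (funCat V X) fun ψ => IsPresheaf a ψ ∧ InPhi Φ a ψ

/-- The inclusion `ΦX → PX`. -/
def phiIncl (Φ : DistClass V) {X : Type u} (a : VCatStr V X) : PhiCarrier Φ a → PCarrier a :=
  fun ψ => ⟨ψ.1, ψ.2.1⟩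

/-- The corestricted Yoneda functor `y^Φ_X : X → ΦX`. -/
def yPhi (Φ : DistClass V) (hΦ : DistAx Φ) {X : Type u} (a : VCatStr V X) (x : X) :
    PhiCarrier Φ a :=
  ⟨fun x' => a.hom x' x,
   fun x' x'' => a.comp x' x'' x,
   hΦ.ax1 (unitCat V) a (fun _ => x) (fun _ _ => a.refl x)⟩

/-- `Φf : ΦX → ΦY`, `ψ ↦ ψ ∘ f^*`. -/
def phiMap (Φ : DistClass V) (hΦ : DistAx Φ) {X Y : Type u} (a : VCatStr V X) (b : VCatStr V Y)
    (f : X → Y) (hf : IsVFunctor a b f) (ψ : PhiCarrier Φ a) : PhiCarrier Φ b :=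
  ⟨fun y => ⨆ x, b.hom y (f x) * ψ.1 x,
   by
    intro y' y
    rw [mul_iSup']
    refine iSup_le fun x => ?_
    refine le_trans ?_ (le_iSup _ x)
    calc b.hom y' y * (b.hom y (f x) * ψ.1 x)
        = (b.hom y' y * b.hom y (f x)) * ψ.1 x := (mul_assoc _ _ _).symm
      _ ≤ b.hom y' (f x) * ψ.1 x := mul_mono_left' (b.comp y' y (f x)) _,
   by
    have hd : IsDist a (unitCat V) (fun x (_ : PUnit) => ψ.1 x) :=
      ⟨fun x' x _ => ψ.2.1 x' x, fun x _ _ => le_of_eq (mul_one _)⟩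
    exact hΦ.ax2_right a b (unitCat V) _ f hd hf ψ.2.2⟩

/-- `g` is the `φ`-weighted colimit of `h`, i.e. `g_* = h_* ⟜ φ`. -/
def IsColimit {Y Z X : Type u} (_b : VCatStr V Y) (_c : VCatStr V Z) (a : VCatStr V X)
    (φ : Y → Z → V) (h : Y → X) (g : Z → X) : Prop :=
  ∀ z x, a.hom (g z) x = ⨅ y, qhom (φ y z) (a.hom (h y) x)

/-- `Φ`-cocompleteness. -/
def PhiCocomplete (Φ : DistClass V) {X : Type u} (a : VCatStr V X) : Prop :=
  ∀ ⦃Y Z : Type u⦄ (b : VCatStr V Y) (c : VCatStr V Z) (φ : Y → Z → V) (h : Y → X),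
    IsDist b c φ → Φ b c φ → IsVFunctor b a h →
    ∃ g : Z → X, IsVFunctor c a g ∧ IsColimit b c a φ h g

/-- `Φ`-cocontinuity. -/
def PhiCocontinuous (Φ : DistClass V) {X X' : Type u} (a : VCatStr V X) (a' : VCatStr V X')
    (f : X → X') : Prop :=
  ∀ ⦃Y Z : Type u⦄ (b : VCatStr V Y) (c : VCatStr V Z) (φ : Y → Z → V) (h : Y → X) (g : Z → X),
    IsDist b c φ → Φ b c φ → IsVFunctor b a h → IsVFunctor c a g →
    IsColimit b c a φ h g → IsColimit b c a' φ (f ∘ h) (f ∘ g)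

/-- `Φ`-injectivity. -/
def PhiInjective (Φ : DistClass V) {X : Type u} (a : VCatStr V X) : Prop :=
  ∀ ⦃A B : Type u⦄ (α : VCatStr V A) (β : VCatStr V B) (f : A → X) (i : A → B),
    IsVFunctor α a f → IsVFunctor α β i → FullyFaithful α β i → PhiDense Φ α β i →
    ∃ g : B → X, IsVFunctor β a g ∧ VEquiv a (g ∘ i) f

/-- Separatedness. -/
def Separated {X : Type u} (a : VCatStr V X) : Prop :=
  ∀ ⦃Y : Type u⦄ (b : VCatStr V Y) (f g : Y → X),
    IsVFunctor b a f → IsVFunctor b a g → VEquiv a f g → f = g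

/-- Lemma 1.(1): if `α` is a right adjoint distributor, then
`α ∘ (φ ⟜ ψ) = (α ∘ φ) ⟜ ψ`. -/
theorem stmt0 {W U Y Z : Type u}
    (d : VCatStr V W) (uS : VCatStr V U) (b : VCatStr V Y) (c : VCatStr V Z)
    (ψ : W → U → V) (φ : W → Y → V) (α : Y → Z → V)
    (hψ : IsDist d uS ψ) (hφ : IsDist d b φ) (hα : IsDist b c α)
    (hra : IsRightAdjDist b c α) :
    dComp α (dExt φ ψ) = dExt (dComp α φ) ψ := by
  obtain ⟨β, hβ, hadj⟩ := hra
  funext u z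
  apply le_antisymm
  · refine iSup_le fun y => le_iInf fun w => le_qhom_iff.mpr ?_
    calc ψ w u * (dExt φ ψ u y * α y z)
        = (ψ w u * dExt φ ψ u y) * α y z := (mul_assoc _ _ _).symm
      _ ≤ φ w y * α y z :=
          mul_mono_left' (le_qhom_iff.mp (iInf_le (fun x => qhom (ψ x u) (φ x y)) w)) _
      _ ≤ ⨆ y', φ w y' * α y' z := le_iSup (fun y' => φ w y' * α y' z) y
  · have key : ∀ y, dExt (dComp α φ) ψ u z * β z y ≤ dExt φ ψ u y := by
      intro y
      refine le_iInf fun w => le_qhom_iff.mpr ?_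
      calc ψ w u * (dExt (dComp α φ) ψ u z * β z y)
          = (ψ w u * dExt (dComp α φ) ψ u z) * β z y := (mul_assoc _ _ _).symm
        _ ≤ dComp α φ w z * β z y :=
            mul_mono_left'
              (le_qhom_iff.mp (iInf_le (fun x => qhom (ψ x u) (dComp α φ x z)) w)) _
        _ = ⨆ y', (φ w y' * α y' z) * β z y := by
            simp only [dComp]
            rw [mul_comm, mul_iSup']; exact iSup_congr fun y' => mul_comm _ _
        _ ≤ φ w y := iSup_le fun y' => by
            calc φ w y' * α y' z * β z y
                = φ w y' * (α y' z * β z y) := mul_assoc _ _ _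
              _ ≤ φ w y' * b.hom y' y :=
                  mul_mono_right' _
                    (le_trans (le_iSup (fun z' => α y' z' * β z' y) z) (hadj.2 y' y))
              _ ≤ φ w y := hφ.2 w y' y
    calc dExt (dComp α φ) ψ u z
        = dExt (dComp α φ) ψ u z * 1 := (mul_one _).symm
      _ ≤ dExt (dComp α φ) ψ u z * c.hom z z := mul_mono_right' _ (c.refl z)
      _ ≤ dExt (dComp α φ) ψ u z * ⨆ y, β z y * α y z :=
          mul_mono_right' _ (hadj.1 z z)
      _ = ⨆ y, dExt (dComp α φ) ψ u z * (β z y * α y z) := mul_iSup' _ _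
      _ ≤ ⨆ y, dExt φ ψ u y * α y z := iSup_mono fun y => by
          calc dExt (dComp α φ) ψ u z * (β z y * α y z)
              = (dExt (dComp α φ) ψ u z * β z y) * α y z := (mul_assoc _ _ _).symm
            _ ≤ dExt φ ψ u y * α y z := mul_mono_left' (key y) _
end

section
/- Let V be a commutative unital quantale, Φ a class of V-distributors satisfying (Ax1)–(Ax3), and f : (X,a) → (Y,b), g : (Y,b) → (Z,c), h : (X,a) → (Z,c) V-functors with g ∘ f ≅ h. Then: (1) if f and g are Φ-dense, so is h; (2) if h is Φ-dense and g is fully faithful, then f is Φ-dense; (3) if h is Φ-dense and f is dense, then g is Φ-dense. -/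
universe u

variable {V : Type u} [CommQuantale V]

theorem iSup_mul'' {ι : Sort*} (v : ι → V) (u : V) : (⨆ i, v i) * u = ⨆ i, v i * u := by
  rw [mul_comm, mul_iSup']; exact iSup_congr fun i => mul_comm u (v i)

theorem vle_mul_left {u : V} (h : (1 : V) ≤ u) (v : V) : v ≤ u * v := by
  calc v = 1 * v := (one_mul v).symm
    _ ≤ u * v := mul_mono_left' h v

theorem vle_mul_right {u : V} (h : (1 : V) ≤ u) (v : V) : v ≤ v * u := by
  calc v = v * 1 := (mul_one v).symm
    _ ≤ v * u := mul_mono_right' v h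

theorem isDist_fStar {X Y : Type u} (a : VCatStr V X) (b : VCatStr V Y) (f : X → Y)
    (hf : IsVFunctor a b f) : IsDist a b (fStar b f) :=
  ⟨fun x' x y => le_trans (mul_mono_left' (hf x' x) _) (b.comp _ _ _),
   fun x y y' => b.comp _ _ _⟩

/-- Composition and cancellation of `Φ`-dense `V`-functors for a triangle `g ∘ f ≅ h`. -/
theorem stmt6 (Φ : DistClass V) (hΦ : DistAx Φ) {X Y Z : Type u}
    (a : VCatStr V X) (b : VCatStr V Y) (c : VCatStr V Z)
    (f : X → Y) (g : Y → Z) (h : X → Z)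
    (hf : IsVFunctor a b f) (hg : IsVFunctor b c g) (hh : IsVFunctor a c h)
    (htri : VEquiv c (g ∘ f) h) :
    (PhiDense Φ a b f → PhiDense Φ b c g → PhiDense Φ a c h) ∧
    (PhiDense Φ a c h → FullyFaithful b c g → PhiDense Φ a b f) ∧
    (PhiDense Φ a c h → DenseF b f → PhiDense Φ b c g) := by
  -- h_* equals (g ∘ f)_* pointwise
  have hz : ∀ x z, c.hom (h x) z = c.hom (g (f x)) z := by
    intro x z
    apply le_antisymm
    · exact le_trans (vle_mul_left (htri.1 x) _) (c.comp _ _ _)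
    · exact le_trans (vle_mul_left (htri.2 x) _) (c.comp _ _ _)
  refine ⟨?_, ?_, ?_⟩
  · intro hPf hPg
    have key : fStar c h = dComp (fStar c g) (fStar b f) := by
      funext x z
      simp only [fStar, dComp]
      apply le_antisymm
      · refine le_trans ?_ (le_iSup _ (f x))
        rw [hz]
        exact vle_mul_left (b.refl (f x)) _
      · refine iSup_le fun y => ?_
        rw [hz]
        exact le_trans (mul_mono_left' (hg (f x) y) _) (c.comp _ _ _)
    show Φ a c (fStar c h)
    rw [key]
    exact hΦ.ax2_star a b c (fStar c g) f (isDist_fStar b c g hg) hf hPg hPf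
  · intro hPh hgff
    have key : fStar b f = dComp (fCostar c g) (fStar c h) := by
      funext x y
      simp only [fStar, fCostar, dComp]
      have heq : c.hom (h x) (g y) = b.hom (f x) y := by rw [hz, hgff]
      apply le_antisymm
      · rw [← heq]
        exact le_trans (vle_mul_right (c.refl (g y)) _)
          (le_iSup (fun z => c.hom (h x) z * c.hom z (g y)) (g y))
      · refine iSup_le fun z => ?_
        exact le_trans (c.comp _ _ _) heq.le
    show Φ a b (fStar b f)
    rw [key]
    exact hΦ.ax2_left a b c (fStar c h) g (isDist_fStar a c h hh) hg hPh
  · intro hPh hdense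
    have key : fStar c g = dComp (fStar c h) (fCostar b f) := by
      funext y z
      simp only [fStar, fCostar, dComp]
      apply le_antisymm
      · calc c.hom (g y) z
            ≤ b.hom y y * c.hom (g y) z := vle_mul_left (b.refl y) _
          _ = (⨆ x, b.hom y (f x) * b.hom (f x) y) * c.hom (g y) z := by rw [hdense y y]
          _ = ⨆ x, (b.hom y (f x) * b.hom (f x) y) * c.hom (g y) z := iSup_mul'' _ _
          _ ≤ ⨆ x, b.hom y (f x) * c.hom (h x) z := by
              refine iSup_mono fun x => ?_
              rw [mul_assoc]
              refine mul_mono_right' _ ?_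
              rw [hz]
              exact le_trans (mul_mono_left' (hg (f x) y) _) (c.comp _ _ _)
      · refine iSup_le fun x => ?_
        rw [hz]
        exact le_trans (mul_mono_left' (hg y (f x)) _) (c.comp _ _ _)
    show Φ b c (fStar c g)
    rw [key]
    exact hΦ.ax2_right a b c (fStar c h) f (isDist_fStar a c h hh) hf hPh
end

section
/- Let V be a commutative unital quantale and Φ a class of V-distributors satisfying (Ax1)–(Ax3). For every V-category (X,a), the corestricted Yoneda functor y^Φ_X : X → ΦX is Φ-dense; that is, the distributor (y^Φ_X)_* : (X,a) ⇸ ΦX, which is given by evaluation (y^Φ_X)_* x ψ = ψ x, belongs to Φ. -/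
universe u

variable {V : Type u} [CommQuantale V]

/-- The corestricted Yoneda functor `y^Φ_X : X → ΦX` is `Φ`-dense, and
`(y^Φ_X)_*` is given by evaluation. -/
theorem stmt7 (Φ : DistClass V) (hΦ : DistAx Φ) {X : Type u} (a : VCatStr V X) :
    IsVFunctor a (phiCat Φ a) (yPhi Φ hΦ a) ∧
    (∀ (x : X) (ψ : PhiCarrier Φ a), fStar (phiCat Φ a) (yPhi Φ hΦ a) x ψ = ψ.1 x) ∧
    PhiDense Φ a (phiCat Φ a) (yPhi Φ hΦ a) := by
  have hfun : IsVFunctor a (phiCat Φ a) (yPhi Φ hΦ a) := by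
    intro x x'
    refine le_iInf fun z => le_qhom_iff.mpr ?_
    exact a.comp z x x'
  have heval : ∀ (x : X) (ψ : PhiCarrier Φ a),
      fStar (phiCat Φ a) (yPhi Φ hΦ a) x ψ = ψ.1 x := by
    intro x ψ
    apply le_antisymm
    · refine le_trans (iInf_le _ x) ?_
      have h1 : qhom (a.hom x x) (ψ.1 x) ≤ a.hom x x * qhom (a.hom x x) (ψ.1 x) := by
        calc qhom (a.hom x x) (ψ.1 x) = 1 * qhom (a.hom x x) (ψ.1 x) := (one_mul _).symm
          _ ≤ a.hom x x * qhom (a.hom x x) (ψ.1 x) := mul_mono_left' (a.refl x) _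
      exact le_trans h1 (le_qhom_iff.mp le_rfl)
    · refine le_iInf fun x' => le_qhom_iff.mpr (ψ.2.1 x' x)
  refine ⟨hfun, heval, ?_⟩
  refine hΦ.ax3 a (phiCat Φ a) _ ⟨?_, ?_⟩ ?_
  · intro x' x ψ
    rw [heval, heval]
    exact ψ.2.1 x' x
  · intro x ψ ψ'
    rw [heval, heval]
    have h1 : (phiCat Φ a).hom ψ ψ' ≤ qhom (ψ.1 x) (ψ'.1 x) :=
      iInf_le (fun z => qhom (ψ.1 z) (ψ'.1 z)) x
    exact le_trans (mul_mono_right' _ h1) (le_qhom_iff.mp le_rfl)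
  · intro ψ
    have : (fun x (_ : PUnit) => fStar (phiCat Φ a) (yPhi Φ hΦ a) x ψ)
        = (fun x (_ : PUnit) => ψ.1 x) := by
      funext x u; exact heval x ψ
    rw [this]; exact ψ.2.2
end

section
/- Let V be a commutative unital quantale and Φ a class of V-distributors satisfying (Ax1)–(Ax3). For a V-category (X,a) the following are equivalent: (i) (X,a) is Φ-injective; (ii) there is a V-functor S : ΦX → X with S ∘ y^Φ_X ≅ 1_X; (iii) y^Φ_X : X → ΦX has a left adjoint; (iv) (X,a) is Φ-cocomplete. -/
universe u

variable {V : Type u} [CommQuantale V]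

theorem mul_qhom_le'' (u v : V) : u * qhom u v ≤ v := le_qhom_iff.mp le_rfl

theorem qhom_anti' {u u' : V} (h : u' ≤ u) (v : V) : qhom u v ≤ qhom u' v :=
  le_qhom_iff.mpr (le_trans (mul_mono_left' h _) (mul_qhom_le'' u v))

theorem one_le_qhom_iff' {u v : V} : (1 : V) ≤ qhom u v ↔ u ≤ v := by
  rw [le_qhom_iff, mul_one]

theorem le_mul_left' {u w : V} (h : (1 : V) ≤ u) : w ≤ u * w := by
  simpa using mul_mono_left' h w

theorem le_mul_right' {u w : V} (h : (1 : V) ≤ u) : w ≤ w * u := by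
  simpa using mul_mono_right' w h

theorem yonedaEq {X : Type u} (a : VCatStr V X) {ψ : X → V} (hψ : IsPresheaf a ψ) (x : X) :
    (⨅ x', qhom (a.hom x' x) (ψ x')) = ψ x := by
  apply le_antisymm
  · exact le_trans (le_mul_left' (a.refl x)) (le_qhom_iff.mp (iInf_le _ x))
  · exact le_iInf fun x' => le_qhom_iff.mpr (hψ x' x)

theorem yPhi_hom (Φ : DistClass V) (hΦ : DistAx Φ) {X : Type u} (a : VCatStr V X)
    (x : X) (ψ : PhiCarrier Φ a) :
    (phiCat Φ a).hom (yPhi Φ hΦ a x) ψ = ψ.1 x :=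
  yonedaEq a ψ.2.1 x

theorem evalIsDist (Φ : DistClass V) {X : Type u} (a : VCatStr V X) :
    IsDist a (phiCat Φ a) (fun x (ψ : PhiCarrier Φ a) => ψ.1 x) := by
  constructor
  · exact fun x' x ψ => ψ.2.1 x' x
  · intro x ψ ψ'
    exact le_qhom_iff.mp (iInf_le (fun x' => qhom (ψ.1 x') (ψ'.1 x')) x)

theorem evalInPhi (Φ : DistClass V) (hΦ : DistAx Φ) {X : Type u} (a : VCatStr V X) :
    Φ a (phiCat Φ a) (fun x (ψ : PhiCarrier Φ a) => ψ.1 x) :=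
  hΦ.ax3 _ _ _ (evalIsDist Φ a) fun ψ => ψ.2.2

theorem dComp_fCostar_isDist {A X Z : Type u} (α : VCatStr V A) (a : VCatStr V X)
    (c : VCatStr V Z) (ψ : A → Z → V) (f : A → X)
    (hψ : IsDist α c ψ) :
    IsDist a c (dComp ψ (fCostar a f)) := by
  constructor
  · intro x' x z
    show a.hom x' x * (⨆ w, a.hom x (f w) * ψ w z) ≤ ⨆ w, a.hom x' (f w) * ψ w z
    rw [mul_iSup']
    refine iSup_le fun w => le_trans ?_ (le_iSup _ w)
    rw [← mul_assoc]
    exact mul_mono_left' (a.comp x' x (f w)) _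
  · intro x z z'
    show (⨆ w, a.hom x (f w) * ψ w z) * c.hom z z' ≤ ⨆ w, a.hom x (f w) * ψ w z'
    rw [mul_comm _ (c.hom z z'), mul_iSup']
    refine iSup_le fun w => le_trans ?_ (le_iSup _ w)
    rw [mul_comm (c.hom z z'), mul_assoc]
    exact mul_mono_right' _ (hψ.2 w z z')

theorem column_inPhi (Φ : DistClass V) (hΦ : DistAx Φ) {X Z : Type u}
    (a : VCatStr V X) (c : VCatStr V Z) (χ : X → Z → V)
    (hd : IsDist a c χ) (hχ : Φ a c χ) (z : Z) :
    Φ a (unitCat V) (fun x (_ : PUnit) => χ x z) := by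
  have h := hΦ.ax2_left a (unitCat V) c χ (fun _ => z) hd (fun _ _ => c.refl z) hχ
  have heq : dComp (fCostar c (fun _ : PUnit => z)) χ = fun x (_ : PUnit) => χ x z := by
    funext x u
    show (⨆ z', χ x z' * c.hom z' z) = χ x z
    apply le_antisymm
    · exact iSup_le fun z' => hd.2 x z' z
    · exact le_trans (le_mul_right' (c.refl z)) (le_iSup (fun z' => χ x z' * c.hom z' z) z)
  rwa [heq] at h

theorem adjFormula (Φ : DistClass V) (hΦ : DistAx Φ) {X : Type u} (a : VCatStr V X)
    (S : PhiCarrier Φ a → X) (hS : IsVFunctor (phiCat Φ a) a S)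
    (hunit : ∀ ψ, (1 : V) ≤ (phiCat Φ a).hom ψ (yPhi Φ hΦ a (S ψ)))
    (hcounit : ∀ x, (1 : V) ≤ a.hom (S (yPhi Φ hΦ a x)) x)
    (ψ : PhiCarrier Φ a) (x : X) :
    a.hom (S ψ) x = ⨅ x', qhom (ψ.1 x') (a.hom x' x) := by
  apply le_antisymm
  · refine le_trans (le_mul_left' (hunit ψ)) (le_iInf fun x' => le_qhom_iff.mpr ?_)
    rw [← mul_assoc]
    refine le_trans (mul_mono_left'
      (le_qhom_iff.mp (iInf_le (fun t => qhom (ψ.1 t) (a.hom t (S ψ))) x')) _)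
      (a.comp x' (S ψ) x)
  · have h1 : (⨅ x', qhom (ψ.1 x') (a.hom x' x)) ≤ a.hom (S ψ) (S (yPhi Φ hΦ a x)) :=
      hS ψ (yPhi Φ hΦ a x)
    calc (⨅ x', qhom (ψ.1 x') (a.hom x' x))
        ≤ a.hom (S ψ) (S (yPhi Φ hΦ a x)) * a.hom (S (yPhi Φ hΦ a x)) x :=
          le_trans (le_mul_right' (hcounit x)) (mul_mono_left' h1 _)
      _ ≤ a.hom (S ψ) x := a.comp _ _ _


/-- `Φ`-injectivity, existence of a left inverse / left adjoint of `y^Φ_X` and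
`Φ`-cocompleteness are equivalent. -/
theorem stmt9 (Φ : DistClass V) (hΦ : DistAx Φ) {X : Type u} (a : VCatStr V X) :
    List.TFAE [
      PhiInjective Φ a,
      ∃ S : PhiCarrier Φ a → X, IsVFunctor (phiCat Φ a) a S ∧
        VEquiv a (S ∘ yPhi Φ hΦ a) id,
      ∃ S : PhiCarrier Φ a → X, IsVFunctor (phiCat Φ a) a S ∧
        (∀ ψ, (1 : V) ≤ (phiCat Φ a).hom ψ (yPhi Φ hΦ a (S ψ))) ∧
        (∀ x, (1 : V) ≤ a.hom (S (yPhi Φ hΦ a x)) x),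
      PhiCocomplete Φ a ] := by
  tfae_have 1 → 2 := by
    intro h1
    have hyf : IsVFunctor a (phiCat Φ a) (yPhi Φ hΦ a) :=
      fun x x' => (yPhi_hom Φ hΦ a x (yPhi Φ hΦ a x')).ge
    have hyff : FullyFaithful a (phiCat Φ a) (yPhi Φ hΦ a) :=
      fun x x' => yPhi_hom Φ hΦ a x (yPhi Φ hΦ a x')
    have hyd : PhiDense Φ a (phiCat Φ a) (yPhi Φ hΦ a) := by
      have heq : fStar (phiCat Φ a) (yPhi Φ hΦ a) = fun x (ψ : PhiCarrier Φ a) => ψ.1 x :=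
        funext fun x => funext fun ψ => yPhi_hom Φ hΦ a x ψ
      rw [PhiDense, heq]
      exact evalInPhi Φ hΦ a
    obtain ⟨g, hg, hge⟩ := h1 a (phiCat Φ a) id (yPhi Φ hΦ a) (fun x x' => le_rfl) hyf hyff hyd
    exact ⟨g, hg, hge⟩
  tfae_have 2 → 3 := by
    rintro ⟨S, hS, e1, e2⟩
    refine ⟨S, hS, ?_, fun x => e1 x⟩
    intro ψ
    show (1 : V) ≤ ⨅ x, qhom (ψ.1 x) (a.hom x (S ψ))
    refine le_iInf fun x => one_le_qhom_iff'.mpr ?_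
    have h1 : ψ.1 x ≤ a.hom (S (yPhi Φ hΦ a x)) (S ψ) := by
      have h := hS (yPhi Φ hΦ a x) ψ
      rw [yPhi_hom Φ hΦ a x ψ] at h
      exact h
    calc ψ.1 x ≤ a.hom x (S (yPhi Φ hΦ a x)) * a.hom (S (yPhi Φ hΦ a x)) (S ψ) :=
        le_trans (le_mul_left' (e2 x)) (mul_mono_right' _ h1)
      _ ≤ a.hom x (S ψ) := a.comp _ _ _
  tfae_have 3 → 4 := by
    rintro ⟨S, hS, hunit, hcounit⟩
    intro Y Z b c φ h hφd hφΦ hh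
    have hχd : IsDist a c (dComp φ (fCostar a h)) := dComp_fCostar_isDist b a c φ h hφd
    have hχΦ : Φ a c (dComp φ (fCostar a h)) := hΦ.ax2_right b a c φ h hφd hh hφΦ
    have hpre : ∀ z, IsPresheaf a (fun x => dComp φ (fCostar a h) x z) :=
      fun z x' x => hχd.1 x' x z
    have hin : ∀ z, InPhi Φ a (fun x => dComp φ (fCostar a h) x z) :=
      fun z => column_inPhi Φ hΦ a c (dComp φ (fCostar a h)) hχd hχΦ z
    set Ψ : Z → PhiCarrier Φ a := fun z => ⟨fun x => dComp φ (fCostar a h) x z, hpre z, hin z⟩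
      with hΨ
    have hΨf : IsVFunctor c (phiCat Φ a) Ψ := fun z z' =>
      le_iInf fun x => le_qhom_iff.mpr (hχd.2 x z z')
    refine ⟨S ∘ Ψ, fun z z' => le_trans (hΨf z z') (hS (Ψ z) (Ψ z')), ?_⟩
    intro z x
    show a.hom (S (Ψ z)) x = _
    rw [adjFormula Φ hΦ a S hS hunit hcounit (Ψ z) x]
    apply le_antisymm
    · refine le_iInf fun y => le_trans (iInf_le _ (h y)) (qhom_anti' ?_ _)
      exact le_trans (le_mul_left' (a.refl (h y)))
        (le_iSup (fun w => a.hom (h y) (h w) * φ w z) y)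
    · refine le_iInf fun x' => le_qhom_iff.mpr ?_
      show (⨆ w, a.hom x' (h w) * φ w z) * (⨅ y, qhom (φ y z) (a.hom (h y) x)) ≤ a.hom x' x
      rw [mul_comm, mul_iSup']
      refine iSup_le fun y => ?_
      calc (⨅ y', qhom (φ y' z) (a.hom (h y') x)) * (a.hom x' (h y) * φ y z)
          = a.hom x' (h y) * (φ y z * (⨅ y', qhom (φ y' z) (a.hom (h y') x))) := by
            rw [mul_comm, mul_assoc]
        _ ≤ a.hom x' (h y) * a.hom (h y) x :=
            mul_mono_right' _ (le_qhom_iff.mp (iInf_le _ y))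
        _ ≤ a.hom x' x := a.comp x' (h y) x
  tfae_have 4 → 2 := by
    intro h4
    obtain ⟨S, hSf, hScol⟩ := h4 a (phiCat Φ a) (fun x ψ => ψ.1 x) id (evalIsDist Φ a)
      (evalInPhi Φ hΦ a) (fun x x' => le_rfl)
    have key : ∀ x x'' : X, a.hom (S (yPhi Φ hΦ a x)) x'' = a.hom x x'' := by
      intro x x''
      rw [hScol (yPhi Φ hΦ a x) x'']
      exact yonedaEq a (fun x' x0 => a.comp x' x0 x'') x
    exact ⟨S, hSf, fun x => le_trans (a.refl x) (key x x).ge,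
      fun x => le_trans (a.refl _) (key x (S (yPhi Φ hΦ a x))).le⟩
  tfae_have 2 → 1 := by
    rintro ⟨S, hS, e1, e2⟩
    intro A B α β f i hf hi hff hdense
    have histar : IsDist α β (fStar β i) := by
      constructor
      · intro a1 a2 b0
        exact le_trans (mul_mono_left' (hi a1 a2) _) (β.comp _ _ _)
      · intro a1 b0 b1
        exact β.comp (i a1) b0 b1
    have hθd : IsDist a β (dComp (fStar β i) (fCostar a f)) :=
      dComp_fCostar_isDist α a β (fStar β i) f histar
    have hθΦ : Φ a β (dComp (fStar β i) (fCostar a f)) :=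
      hΦ.ax2_right α a β (fStar β i) f histar hf hdense
    have hpre : ∀ b0, IsPresheaf a (fun x => dComp (fStar β i) (fCostar a f) x b0) :=
      fun b0 x' x => hθd.1 x' x b0
    have hin : ∀ b0, InPhi Φ a (fun x => dComp (fStar β i) (fCostar a f) x b0) :=
      fun b0 => column_inPhi Φ hΦ a β (dComp (fStar β i) (fCostar a f)) hθd hθΦ b0
    set Ψ : B → PhiCarrier Φ a :=
      fun b0 => ⟨fun x => dComp (fStar β i) (fCostar a f) x b0, hpre b0, hin b0⟩ with hΨ
    have hΨf : IsVFunctor β (phiCat Φ a) Ψ := fun b0 b1 =>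
      le_iInf fun x => le_qhom_iff.mpr (hθd.2 x b0 b1)
    have hkey : ∀ a0 : A, Ψ (i a0) = yPhi Φ hΦ a (f a0) := by
      intro a0
      apply Subtype.ext
      funext x
      show (⨆ a1, a.hom x (f a1) * β.hom (i a1) (i a0)) = a.hom x (f a0)
      apply le_antisymm
      · refine iSup_le fun a1 => ?_
        rw [hff a1 a0]
        exact le_trans (mul_mono_right' _ (hf a1 a0)) (a.comp x (f a1) (f a0))
      · exact le_trans (le_mul_right' (β.refl (i a0))) (le_iSup (fun a1 => a.hom x (f a1) * β.hom (i a1) (i a0)) a0)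
    refine ⟨S ∘ Ψ, fun b0 b1 => le_trans (hΨf b0 b1) (hS _ _), ?_, ?_⟩
    · intro a0
      show (1 : V) ≤ a.hom (S (Ψ (i a0))) (f a0)
      rw [hkey a0]
      exact e1 (f a0)
    · intro a0
      show (1 : V) ≤ a.hom (f a0) (S (Ψ (i a0)))
      rw [hkey a0]
      exact e2 (f a0)
  tfae_finish
end

section
/- Let V be a commutative unital quantale and Φ a class of V-distributors satisfying (Ax1)–(Ax3). For every V-functor f : (X,a) → (Y,b), the V-functor Φf : ΦX → ΦY is the (y^Φ_X)_*-weighted colimit of y^Φ_Y ∘ f; that is, (Φf)_* = ((y^Φ_Y)_* ∘ f_*) ⟜ (y^Φ_X)_* as distributors ΦX ⇸ ΦY. -/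
universe u

variable {V : Type u} [CommQuantale V]

theorem yoneda_lemma' {X : Type u} (a : VCatStr V X) (ψ : X → V) (h : IsPresheaf a ψ) (x : X) :
    (⨅ x', qhom (a.hom x' x) (ψ x')) = ψ x := by
  apply le_antisymm
  · refine le_trans (iInf_le _ x) ?_
    have : qhom (a.hom x x) (ψ x) ≤ a.hom x x * qhom (a.hom x x) (ψ x) := by
      calc qhom (a.hom x x) (ψ x) = 1 * qhom (a.hom x x) (ψ x) := (one_mul _).symm
        _ ≤ a.hom x x * qhom (a.hom x x) (ψ x) := mul_mono_left' (a.refl x) _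
    exact le_trans this (le_qhom_iff.mp le_rfl)
  · exact le_iInf fun x' => le_qhom_iff.mpr (h x' x)

/-- `(Φf)_* = ((y^Φ_Y)_* ∘ f_*) ⟜ (y^Φ_X)_*`, i.e. `Φf ≅ colim((y^Φ_X)_*, y^Φ_Y ∘ f)`. -/
theorem stmt12 (Φ : DistClass V) (hΦ : DistAx Φ) {X Y : Type u}
    (a : VCatStr V X) (b : VCatStr V Y) (f : X → Y) (hf : IsVFunctor a b f) :
    fStar (phiCat Φ b) (phiMap Φ hΦ a b f hf) =
      dExt (dComp (fStar (phiCat Φ b) (yPhi Φ hΦ b)) (fStar b f))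
        (fStar (phiCat Φ a) (yPhi Φ hΦ a)) := by
  funext ψ θ
  -- simplify the weights using Yoneda
  have hα : ∀ x : X, fStar (phiCat Φ a) (yPhi Φ hΦ a) x ψ = ψ.1 x := fun x =>
    yoneda_lemma' a ψ.1 ψ.2.1 x
  have hγ : ∀ x : X,
      dComp (fStar (phiCat Φ b) (yPhi Φ hΦ b)) (fStar b f) x θ = θ.1 (f x) := by
    intro x
    show (⨆ y, b.hom (f x) y * (⨅ y', qhom (b.hom y' y) (θ.1 y'))) = θ.1 (f x)
    apply le_antisymm
    · refine iSup_le fun y => ?_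
      rw [yoneda_lemma' b θ.1 θ.2.1 y]
      exact θ.2.1 (f x) y
    · refine le_trans ?_ (le_iSup _ (f x))
      rw [yoneda_lemma' b θ.1 θ.2.1 (f x)]
      calc θ.1 (f x) = 1 * θ.1 (f x) := (one_mul _).symm
        _ ≤ b.hom (f x) (f x) * θ.1 (f x) := mul_mono_left' (b.refl (f x)) _
  show (⨅ y, qhom ((phiMap Φ hΦ a b f hf ψ).1 y) (θ.1 y)) = ⨅ x, qhom _ _
  have hr : (⨅ x, qhom (fStar (phiCat Φ a) (yPhi Φ hΦ a) x ψ)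
      (dComp (fStar (phiCat Φ b) (yPhi Φ hΦ b)) (fStar b f) x θ)) =
      ⨅ x, qhom (ψ.1 x) (θ.1 (f x)) := by
    refine iInf_congr fun x => ?_
    rw [hα x, hγ x]
  rw [hr]
  apply le_antisymm
  · refine le_iInf fun x => le_qhom_iff.mpr ?_
    have h1 : (⨅ y, qhom ((phiMap Φ hΦ a b f hf ψ).1 y) (θ.1 y)) ≤
        qhom (⨆ x', b.hom (f x) (f x') * ψ.1 x') (θ.1 (f x)) := iInf_le _ (f x)
    have h2 : ψ.1 x ≤ ⨆ x', b.hom (f x) (f x') * ψ.1 x' := by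
      refine le_trans ?_ (le_iSup _ x)
      calc ψ.1 x = 1 * ψ.1 x := (one_mul _).symm
        _ ≤ b.hom (f x) (f x) * ψ.1 x := mul_mono_left' (b.refl (f x)) _
    calc ψ.1 x * (⨅ y, qhom ((phiMap Φ hΦ a b f hf ψ).1 y) (θ.1 y))
        ≤ (⨆ x', b.hom (f x) (f x') * ψ.1 x') *
          qhom (⨆ x', b.hom (f x) (f x') * ψ.1 x') (θ.1 (f x)) := by
          exact le_trans (mul_mono_left' h2 _) (mul_mono_right' _ h1)
      _ ≤ θ.1 (f x) := le_qhom_iff.mp le_rfl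
  · refine le_iInf fun y => le_qhom_iff.mpr ?_
    show (⨆ x, b.hom y (f x) * ψ.1 x) * (⨅ x, qhom (ψ.1 x) (θ.1 (f x))) ≤ θ.1 y
    rw [mul_comm, mul_iSup']
    refine iSup_le fun x => ?_
    rw [mul_comm]
    calc b.hom y (f x) * ψ.1 x * (⨅ x', qhom (ψ.1 x') (θ.1 (f x')))
        = b.hom y (f x) * (ψ.1 x * (⨅ x', qhom (ψ.1 x') (θ.1 (f x')))) := mul_assoc _ _ _
      _ ≤ b.hom y (f x) * θ.1 (f x) :=
          mul_mono_right' _ (le_qhom_iff.mp (iInf_le _ x))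
      _ ≤ θ.1 y := θ.2.1 y (f x)
end
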